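/- For every n ≥ 3 there is no product operation m : ℝⁿ × ℝⁿ → ℝⁿ satisfying, for all x, y, z ∈ ℝⁿ and all a ∈ ℝ: (i) m(x, a·y) = m(a·x, y) = a·m(x,y); (ii) m(x, y+z) = m(x,y) + m(x,z); (iii) m(x,y) = 0 implies x = 0 or y = 0; (iv) m(x,y) = m(y,x). In other words, ℝⁿ with n ≥ 3 admits no commutative (not necessarily associative) algebra structure without zero divisors. -/

import Mathlib

set_option linter.unusedSectionVars false

open Set

noncomputable section NoCommProd

variable {E : Type*} [NormedAddCommGroup E] [InnerProductSpace ℝ E] [FiniteDimensional ℝ E]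

/-- Auxiliary structure packaging a commutative bilinear product without zero divisors. -/
structure HopfMul (E : Type*) [NormedAddCommGroup E] [InnerProductSpace ℝ E] where
  m : E → E → E
  smul_right : ∀ (a : ℝ) (x y : E), m x (a • y) = a • m x y
  smul_left : ∀ (a : ℝ) (x y : E), m (a • x) y = a • m x y
  add_right : ∀ x y z : E, m x (y + z) = m x y + m x z
  nzd : ∀ x y : E, m x y = 0 → x = 0 ∨ y = 0
  comm : ∀ x y : E, m x y = m y x

namespace HopfMul

variable (A : HopfMul E)

/-- The squaring map. -/
def q (x : E) : E := A.m x x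

lemma add_left (x y z : E) : A.m (x + y) z = A.m x z + A.m y z := by
  rw [A.comm, A.add_right, A.comm z x, A.comm z y]

lemma m_zero_right (x : E) : A.m x 0 = 0 := by
  have := A.smul_right 0 x 0; simpa using this

lemma m_zero_left (x : E) : A.m 0 x = 0 := by
  have := A.smul_left 0 0 x; simpa using this

lemma m_neg_right (x y : E) : A.m x (-y) = - A.m x y := by
  have := A.smul_right (-1) x y; simpa using this

lemma m_sub_right (x y z : E) : A.m x (y - z) = A.m x y - A.m x z := by
  rw [sub_eq_add_neg, A.add_right, A.m_neg_right, sub_eq_add_neg]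

lemma q_zero : A.q 0 = 0 := A.m_zero_left 0

lemma q_ne_zero {x : E} (hx : x ≠ 0) : A.q x ≠ 0 := by
  intro h
  rcases A.nzd _ _ h with h' | h' <;> exact hx h'

lemma q_smul (a : ℝ) (x : E) : A.q (a • x) = (a * a) • A.q x := by
  unfold q; rw [A.smul_left, A.smul_right, smul_smul]

lemma q_neg (x : E) : A.q (-x) = A.q x := by
  have := A.q_smul (-1) x; simpa using this

/-- The key two-to-one property. -/
lemma two_to_one {a b : E} (h : A.q a = A.q b) : a = b ∨ a = -b := by
  have key : A.m (a - b) (a + b) = 0 := by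
    rw [A.comm, A.m_sub_right, A.add_left, A.add_left]
    unfold q at h
    rw [A.comm b a]
    rw [show A.m a a + A.m a b - (A.m a b + A.m b b) = A.m a a - A.m b b by abel, h]
    simp
  rcases A.nzd _ _ key with h' | h'
  · left; exact sub_eq_zero.mp h'
  · right; have := eq_neg_of_add_eq_zero_left h'; exact this



/-- `m` as a linear map in each variable, bundled. -/
def bil : E →ₗ[ℝ] E →ₗ[ℝ] E :=
  LinearMap.mk₂ ℝ A.m A.add_left A.smul_left A.add_right A.smul_right

/-- `m` as a continuous bilinear map. -/
def bilc : E →L[ℝ] E →L[ℝ] E :=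
  LinearMap.toContinuousLinearMap
    ((LinearMap.toContinuousLinearMap : (E →ₗ[ℝ] E) ≃ₗ[ℝ] (E →L[ℝ] E)).toLinearMap.comp A.bil)

@[simp] lemma bilc_apply (x y : E) : A.bilc x y = A.m x y := rfl

lemma continuous_q : Continuous A.q := by
  have h : IsBoundedBilinearMap ℝ (fun p : E × E => A.bilc p.1 p.2) :=
    A.bilc.isBoundedBilinearMap
  have : Continuous (fun x : E => A.bilc x x) :=
    h.continuous.comp (continuous_id.prodMk continuous_id)
  exact this

/-- Strict derivative of the squaring map. -/
lemma hasStrictFDerivAt_q (x : E) :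
    HasStrictFDerivAt A.q ((2 : ℝ) • (A.bilc x)) x := by
  have h : IsBoundedBilinearMap ℝ (fun p : E × E => A.bilc p.1 p.2) :=
    A.bilc.isBoundedBilinearMap
  have hd : HasStrictFDerivAt (fun x : E => ((x, x) : E × E))
      ((ContinuousLinearMap.id ℝ E).prod (ContinuousLinearMap.id ℝ E)) x :=
    ((ContinuousLinearMap.id ℝ E).prod (ContinuousLinearMap.id ℝ E)).hasStrictFDerivAt
  have hcomp := HasStrictFDerivAt.comp (g := fun p : E × E => A.bilc p.1 p.2)
    (f := fun y : E => (y, y)) x (h.hasStrictFDerivAt (x, x)) hd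
  have heq : ((h.deriv (x, x)).comp
      (((ContinuousLinearMap.id ℝ E).prod (ContinuousLinearMap.id ℝ E)))) = (2 : ℝ) • (A.bilc x) := by
    ext v
    simp [IsBoundedBilinearMap.deriv_apply, two_smul]
    exact A.comm v x
  rw [heq] at hcomp
  exact hcomp

/-- The derivative as a continuous linear equivalence, for `x ≠ 0`. -/
def deriv_equiv {x : E} (hx : x ≠ 0) : E ≃L[ℝ] E :=
  LinearEquiv.toContinuousLinearEquiv
    (LinearEquiv.ofBijective ((2 : ℝ) • (A.bil x))
      (by
        have hinj : Function.Injective ((2 : ℝ) • (A.bil x) : E →ₗ[ℝ] E) := by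
          intro a b hab
          have : A.m x ((2:ℝ) • a) = A.m x ((2:ℝ) • b) := by
            simpa [A.smul_right, bil] using hab
          have h0 : A.m x ((2:ℝ) • (a - b)) = 0 := by
            rw [smul_sub, A.m_sub_right, this, sub_self]
          rcases A.nzd _ _ h0 with h | h
          · exact absurd h hx
          · have : a - b = 0 := by
              have := smul_eq_zero.mp h
              rcases this with h | h
              · norm_num at h
              · exact h
            exact sub_eq_zero.mp this
        exact ⟨hinj, (LinearMap.injective_iff_surjective).mp hinj⟩))

@[simp] lemma deriv_equiv_coe {x : E} (hx : x ≠ 0) :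
    ((A.deriv_equiv hx : E →L[ℝ] E) : E → E) = fun v => (2:ℝ) • A.m x v := by
  rfl

/-- Local continuous sections of `q` near any point `q x`, `x ≠ 0`. -/
lemma exists_section {x : E} (hx : x ≠ 0) :
    ∃ (V : Set E) (r : E → E), IsOpen V ∧ A.q x ∈ V ∧ ContinuousOn r V ∧
      ∀ y ∈ V, A.q (r y) = y := by
  have hq : HasStrictFDerivAt A.q ((A.deriv_equiv hx : E ≃L[ℝ] E) : E →L[ℝ] E) x := by
    have hco : ((A.deriv_equiv hx : E ≃L[ℝ] E) : E →L[ℝ] E) = (2:ℝ) • A.bilc x := by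
      ext v; rfl
    rw [hco]; exact A.hasStrictFDerivAt_q x
  set F := hq.toOpenPartialHomeomorph A.q with hF
  refine ⟨F.target, F.symm, F.open_target, ?_, F.symm.continuousOn, ?_⟩
  · have hx' : x ∈ F.source := hq.mem_toOpenPartialHomeomorph_source
    have := F.map_source hx'
    simpa [hF, HasStrictFDerivAt.toOpenPartialHomeomorph_coe] using this
  · intro y hy
    have := F.right_inv hy
    calc A.q (F.symm y) = F (F.symm y) := by
          rw [show (F : E → E) = A.q from hq.toOpenPartialHomeomorph_coe]
    _ = y := this


section Surj

variable [Nontrivial E]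

lemma norm_q_bounds : ∃ c C : ℝ, 0 < c ∧ 0 < C ∧
    ∀ x : E, c * ‖x‖ ^ 2 ≤ ‖A.q x‖ ∧ ‖A.q x‖ ≤ C * ‖x‖ ^ 2 := by
  have hS : IsCompact (Metric.sphere (0 : E) 1) := isCompact_sphere 0 1
  have hSne : (Metric.sphere (0 : E) 1).Nonempty :=
    NormedSpace.sphere_nonempty.mpr zero_le_one
  have hcont : ContinuousOn (fun z => ‖A.q z‖) (Metric.sphere (0 : E) 1) :=
    (A.continuous_q.norm).continuousOn
  obtain ⟨z₀, hz₀, hmin'⟩ := hS.exists_isMinOn hSne hcont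
  obtain ⟨z₁, hz₁, hmax'⟩ := hS.exists_isMaxOn hSne hcont
  have hmin : ∀ z ∈ Metric.sphere (0:E) 1, ‖A.q z₀‖ ≤ ‖A.q z‖ := fun z hz => hmin' hz
  have hmax : ∀ z ∈ Metric.sphere (0:E) 1, ‖A.q z‖ ≤ ‖A.q z₁‖ := fun z hz => hmax' hz
  have hz₀ne : z₀ ≠ 0 := by
    intro h; rw [h] at hz₀; simp at hz₀
  have hc : 0 < ‖A.q z₀‖ := norm_pos_iff.mpr (A.q_ne_zero hz₀ne)
  refine ⟨‖A.q z₀‖, ‖A.q z₁‖, hc, lt_of_lt_of_le hc (hmax z₀ hz₀), ?_⟩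
  intro x
  rcases eq_or_ne x 0 with rfl | hx
  · simp [A.q_zero]
  · have hnx : (0:ℝ) < ‖x‖ := norm_pos_iff.mpr hx
    set u := ‖x‖⁻¹ • x with hu
    have hus : u ∈ Metric.sphere (0 : E) 1 := by
      simp [hu, norm_smul, abs_of_pos (inv_pos.mpr hnx), inv_mul_cancel₀ hnx.ne']
    have hxu : x = ‖x‖ • u := by
      rw [hu, smul_smul, mul_inv_cancel₀ hnx.ne', one_smul]
    have hqx : ‖A.q x‖ = ‖x‖ ^ 2 * ‖A.q u‖ := by
      conv_lhs => rw [hxu]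
      rw [A.q_smul, norm_smul, Real.norm_eq_abs,
        abs_of_nonneg (by positivity : (0:ℝ) ≤ ‖x‖ * ‖x‖)]
      ring
    constructor
    · rw [hqx]; nlinarith [hmin u hus, sq_nonneg ‖x‖]
    · rw [hqx]; nlinarith [hmax u hus, sq_nonneg ‖x‖]

/-- The image of the squaring map is closed in the punctured space. -/
lemma q_closure {y : E} (hy : y ≠ 0)
    (hyc : y ∈ closure (A.q '' {x : E | x ≠ 0})) : y ∈ A.q '' {x : E | x ≠ 0} := by
  obtain ⟨c, C, hc, hC, hbd⟩ := A.norm_q_bounds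
  rw [mem_closure_iff_seq_limit] at hyc
  obtain ⟨g, hgT, hglim⟩ := hyc
  have hny : (0:ℝ) < ‖y‖ := norm_pos_iff.mpr hy
  set r := Real.sqrt (‖y‖ / (2 * C)) with hr
  set R := Real.sqrt (2 * ‖y‖ / c) with hR
  have hrpos : 0 < r := Real.sqrt_pos.mpr (by positivity)
  set K := {z : E | r ≤ ‖z‖} ∩ Metric.closedBall (0:E) R with hK
  have hKcpt : IsCompact K := by
    refine (isCompact_closedBall (0:E) R).inter_left ?_
    exact isClosed_le continuous_const continuous_norm
  have hKX : K ⊆ {x : E | x ≠ 0} := by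
    intro z hz h0
    rw [h0] at hz
    have := hz.1
    simp at this
    linarith
  have hclosed : IsClosed (A.q '' K) := (hKcpt.image A.continuous_q).isClosed
  have hev : ∀ᶠ n in Filter.atTop, g n ∈ A.q '' K := by
    have hnorm : Filter.Tendsto (fun n => ‖g n‖) Filter.atTop (nhds ‖y‖) := hglim.norm
    have h1 : ∀ᶠ n in Filter.atTop, ‖y‖ / 2 < ‖g n‖ :=
      hnorm.eventually_const_lt (by linarith)
    have h2 : ∀ᶠ n in Filter.atTop, ‖g n‖ < 2 * ‖y‖ :=
      hnorm.eventually_lt_const (by linarith)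
    filter_upwards [h1, h2] with n hn1 hn2
    obtain ⟨x, hxX, hxq⟩ := hgT n
    have hxne : x ≠ 0 := hxX
    have hb := hbd x
    rw [hxq] at hb
    refine ⟨x, ⟨?_, ?_⟩, hxq⟩
    · -- r ≤ ‖x‖
      have hx2 : ‖y‖ / (2 * C) ≤ ‖x‖ ^ 2 := by
        have := hb.2
        rw [div_le_iff₀ (by positivity)]
        nlinarith
      calc r ≤ Real.sqrt (‖x‖ ^ 2) := Real.sqrt_le_sqrt hx2
        _ = ‖x‖ := by rw [Real.sqrt_sq (norm_nonneg x)]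
    · -- ‖x‖ ≤ R
      rw [Metric.mem_closedBall, dist_zero_right]
      have hx2 : ‖x‖ ^ 2 ≤ 2 * ‖y‖ / c := by
        have := hb.1
        rw [le_div_iff₀ hc]
        nlinarith
      calc ‖x‖ = Real.sqrt (‖x‖ ^ 2) := (Real.sqrt_sq (norm_nonneg x)).symm
        _ ≤ R := Real.sqrt_le_sqrt hx2
  have hmem : y ∈ A.q '' K := hclosed.mem_of_tendsto hglim hev
  obtain ⟨x, hxK, hxq⟩ := hmem
  exact ⟨x, hKX hxK, hxq⟩

/-- Surjectivity of the squaring map onto the punctured space. -/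
lemma q_surj (hrank : 1 < Module.rank ℝ E) {y : E} (hy : y ≠ 0) :
    ∃ x, x ≠ 0 ∧ A.q x = y := by
  set X := {x : E | x ≠ 0} with hX
  set T := A.q '' X with hT
  -- relative openness data
  have hsec : ∀ y' ∈ T, ∃ V : Set E, IsOpen V ∧ y' ∈ V ∧ V ∩ X ⊆ T := by
    rintro y' ⟨x, hx, rfl⟩
    obtain ⟨V, rr, hVo, hmem, _, hs⟩ := A.exists_section hx
    refine ⟨V, hVo, hmem, ?_⟩
    rintro z ⟨hzV, hzX⟩
    refine ⟨rr z, ?_, hs z hzV⟩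
    intro h0
    apply hzX
    rw [← hs z hzV, h0, A.q_zero]
  choose! V hVo hVmem hVsub using hsec
  set O := ⋃ (y' : E) (_ : y' ∈ T), V y' with hO
  have hOopen : IsOpen O := isOpen_iUnion fun y' => isOpen_iUnion fun h => hVo y' h
  have hTO : T ⊆ O := fun y' hy' => Set.mem_biUnion hy' (hVmem y' hy')
  have hOXT : O ∩ X ⊆ T := by
    rintro z ⟨hzO, hzX⟩
    obtain ⟨y', hy', hzV⟩ := Set.mem_iUnion₂.mp hzO
    exact hVsub y' hy' ⟨hzV, hzX⟩
  -- conclude by connectedness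
  have hXconn : IsPreconnected X := by
    have h := (isConnected_compl_singleton_of_one_lt_rank hrank (0:E)).isPreconnected
    have : X = ({(0:E)}ᶜ : Set E) := by ext z; simp [hX]
    rw [this]; exact h
  by_contra hcon
  have hyT : y ∉ T := by
    intro h
    obtain ⟨x, hx, hxq⟩ := h
    exact hcon ⟨x, hx, hxq⟩
  have hXuv : X ⊆ O ∪ (closure T)ᶜ := by
    intro z hz
    by_cases hzT : z ∈ closure T
    · left; exact hTO (A.q_closure hz hzT)
    · right; exact hzT
  have hXO : (X ∩ O).Nonempty := by
    have hune : ∃ x : E, x ≠ 0 := exists_ne 0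
    obtain ⟨x, hx⟩ := hune
    exact ⟨A.q x, A.q_ne_zero hx, hTO ⟨x, hx, rfl⟩⟩
  have hXC : (X ∩ (closure T)ᶜ).Nonempty := by
    refine ⟨y, hy, ?_⟩
    intro hyc
    exact hyT (A.q_closure hy hyc)
  obtain ⟨z, hzX, hzO, hzC⟩ := hXconn O (closure T)ᶜ hOopen (isClosed_closure.isOpen_compl) hXuv hXO hXC
  exact hzC (subset_closure (hOXT ⟨hzO, hzX⟩))

end Surj

/-- Two continuous lifts of the same path agree everywhere or are everywhere antipodal. -/
lemma dichotomy {s : Set ℝ} (hs : IsPreconnected s) {f g : ℝ → E}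
    (hf : ContinuousOn f s) (hg : ContinuousOn g s)
    (hq : ∀ t ∈ s, A.q (f t) = A.q (g t)) (hgz : ∀ t ∈ s, g t ≠ 0) :
    (∀ t ∈ s, f t = g t) ∨ (∀ t ∈ s, f t = -g t) := by
  have hpt : ∀ t ∈ s, f t = g t ∨ f t = -g t := fun t ht => A.two_to_one (hq t ht)
  set F : ℝ → ℝ := fun t => inner (𝕜 := ℝ) (f t) (g t) with hF
  have hFcont : ContinuousOn F s := ContinuousOn.inner hf hg
  have hFpos : ∀ t ∈ s, f t = g t → 0 < F t := by
    intro t ht h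
    rw [hF]; simp only [h, real_inner_self_eq_norm_sq]
    exact pow_pos (norm_pos_iff.mpr (hgz t ht)) 2
  have hFneg : ∀ t ∈ s, f t = -g t → F t < 0 := by
    intro t ht h
    rw [hF]; simp only [h, inner_neg_left, real_inner_self_eq_norm_sq]
    have h2 : (0:ℝ) < ‖g t‖ ^ 2 := pow_pos (norm_pos_iff.mpr (hgz t ht)) 2
    linarith
  by_cases hall : ∀ t ∈ s, f t = g t
  · exact Or.inl hall
  · right
    push_neg at hall
    obtain ⟨t₂, ht₂, hne₂⟩ := hall
    have hneg₂ : f t₂ = -g t₂ := (hpt t₂ ht₂).resolve_left hne₂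
    intro t ht
    rcases hpt t ht with h | h
    · exfalso
      have h1 : 0 < F t := hFpos t ht h
      have h2 : F t₂ < 0 := hFneg t₂ ht₂ hneg₂
      obtain ⟨x, hxs, hxF⟩ := hs.intermediate_value₂ ht₂ ht hFcont
        (continuousOn_const (c := (0:ℝ))) (le_of_lt h2) (le_of_lt h1)
      rcases hpt x hxs with hx | hx
      · exact absurd hxF (ne_of_gt (hFpos x hxs hx))
      · exact absurd hxF (ne_of_lt (hFneg x hxs hx))
    · exact h


lemma q_add (x y : E) : A.q (x + y) = A.q x + (2:ℝ) • A.m x y + A.q y := by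
  unfold q
  rw [A.add_left, A.add_right, A.add_right, A.comm y x, two_smul]
  abel

/-- The main theorem: no such structure in dimension `≥ 3`. -/
theorem false_of_finrank (A : HopfMul E) (hrank : 3 ≤ Module.finrank ℝ E) : False := by
  classical
  haveI : Nontrivial E := by
    have : 0 < Module.finrank ℝ E := by omega
    exact Module.nontrivial_of_finrank_pos this
  have hrank1 : 1 < Module.rank ℝ E := by
    rw [← Module.finrank_eq_rank]
    exact_mod_cast (by omega : 1 < Module.finrank ℝ E)
  obtain ⟨u, hu⟩ := exists_ne (0 : E)
  obtain ⟨w, hw0, hwq⟩ := A.q_surj hrank1 (neg_ne_zero.mpr (A.q_ne_zero hu))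
  have hind : ∀ a : ℝ, w ≠ a • u := by
    intro a h
    apply A.q_ne_zero hu
    have h1 : A.q w = (a * a) • A.q u := by rw [h, A.q_smul]
    rw [hwq] at h1
    have h2 : ((a * a + 1) : ℝ) • A.q u = 0 := by
      rw [add_smul, one_smul, ← h1]; abel
    rcases smul_eq_zero.mp h2 with h3 | h3
    · nlinarith [sq_nonneg a]
    · exact h3
  -- the path γ and loop δ
  set γ : ℝ → E := fun t => Real.cos (Real.pi * t) • u + Real.sin (Real.pi * t) • w with hγ
  have hγcont : Continuous γ := by
    apply Continuous.add
    · exact (Real.continuous_cos.comp (continuous_const.mul continuous_id)).smul continuous_const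
    · exact (Real.continuous_sin.comp (continuous_const.mul continuous_id)).smul continuous_const
  have hγ0 : γ 0 = u := by simp [hγ]
  have hγ1 : γ 1 = -u := by simp [hγ]
  have hγne : ∀ t, γ t ≠ 0 := by
    intro t h
    by_cases hs : Real.sin (Real.pi * t) = 0
    · have hc : Real.cos (Real.pi * t) ≠ 0 := by
        intro hc
        have := Real.sin_sq_add_cos_sq (Real.pi * t)
        rw [hs, hc] at this; norm_num at this
      rw [hγ] at h
      simp only [hs, zero_smul, add_zero] at h
      exact hu (by
        have := smul_eq_zero.mp h
        rcases this with h' | h'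
        · exact absurd h' hc
        · exact h')
    · apply hind ((Real.sin (Real.pi * t))⁻¹ * (- Real.cos (Real.pi * t)))
      rw [hγ] at h
      have : Real.sin (Real.pi * t) • w = -(Real.cos (Real.pi * t) • u) := by
        rw [eq_neg_iff_add_eq_zero, add_comm]; exact h
      calc w = (Real.sin (Real.pi * t))⁻¹ • (Real.sin (Real.pi * t) • w) := by
            rw [smul_smul, inv_mul_cancel₀ hs, one_smul]
      _ = ((Real.sin (Real.pi * t))⁻¹ * (- Real.cos (Real.pi * t))) • u := by
            rw [this]; module
  set δ : ℝ → E := fun t => A.q (γ t) with hδ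
  have hδcont : Continuous δ := A.continuous_q.comp hγcont
  have hδne : ∀ t, δ t ≠ 0 := fun t => A.q_ne_zero (hγne t)
  have hδ01 : δ 0 = δ 1 := by
    rw [hδ]; simp only [hγ0, hγ1, A.q_neg]
  -- the span
  set Wsp : Submodule ℝ E := Submodule.span ℝ {A.q u, A.m u w} with hWsp
  have hδW : ∀ t, δ t ∈ Wsp := by
    intro t
    have hexp : δ t = ((Real.cos (Real.pi*t))^2 - (Real.sin (Real.pi*t))^2) • A.q u
        + (2 * Real.cos (Real.pi*t) * Real.sin (Real.pi*t)) • A.m u w := by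
      show A.q (Real.cos (Real.pi*t) • u + Real.sin (Real.pi*t) • w) = _
      set c := Real.cos (Real.pi*t) with hc; set s' := Real.sin (Real.pi*t) with hs'
      rw [A.q_add, A.q_smul, A.q_smul, hwq, A.smul_left, A.smul_right]
      rw [smul_smul, smul_smul, smul_neg, sub_smul]
      rw [show ((c^2 : ℝ)) = c * c by ring, show ((s'^2 : ℝ)) = s' * s' by ring]
      rw [show ((2 * c * s' : ℝ)) • A.m u w = ((2:ℝ) • ((c * s') • A.m u w)) by
        rw [smul_smul]; ring_nf]
      abel
    rw [hexp]
    have h1 : A.q u ∈ Wsp := Submodule.subset_span (by simp)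
    have h2 : A.m u w ∈ Wsp := Submodule.subset_span (by simp)
    exact Wsp.add_mem (Wsp.smul_mem _ h1) (Wsp.smul_mem _ h2)
  have hWne : Wsp ≠ ⊤ := by
    intro htop
    have hle : Module.finrank ℝ Wsp ≤ 2 := by
      have := finrank_span_le_card (R := ℝ) ({A.q u, A.m u w} : Set E)
      refine le_trans this ?_
      have : ({A.q u, A.m u w} : Set E).toFinset.card ≤ ({A.q u, A.m u w} : Finset E).card := by
        apply le_of_eq
        congr 1
        simp
      refine le_trans this ?_
      exact le_trans (Finset.card_insert_le _ _) (by simp)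
    rw [htop] at hle
    rw [finrank_top] at hle
    omega
  obtain ⟨p, hp⟩ : ∃ p : E, p ∉ Wsp := by
    by_contra hcon
    push_neg at hcon
    exact hWne (Submodule.eq_top_iff'.mpr hcon)
  have hp0 : p ≠ 0 := fun h => hp (h ▸ Wsp.zero_mem)
  -- the homotopy
  set H : ℝ → ℝ → E := fun s t => (1 - s) • δ t + s • p with hH
  have hHcont : Continuous (fun z : ℝ × ℝ => H z.1 z.2) := by
    apply Continuous.add
    · exact ((continuous_const.sub continuous_fst).smul (hδcont.comp continuous_snd))
    · exact continuous_fst.smul continuous_const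
  have hH0 : ∀ t, H 0 t = δ t := by intro t; simp [hH]
  have hH1 : ∀ t, H 1 t = p := by intro t; simp [hH]
  have hHedge : ∀ s, H s 0 = H s 1 := by intro s; simp [hH, hδ01]
  have hHne : ∀ s ∈ Icc (0:ℝ) 1, ∀ t, H s t ≠ 0 := by
    rintro s ⟨hs0, hs1⟩ t h
    rcases eq_or_lt_of_le hs0 with rfl | hspos
    · rw [hH0] at h
      exact hδne t h
    · apply hp
      have : s • p = -((1 - s) • δ t) := by
        rw [eq_neg_iff_add_eq_zero, add_comm]; exact h
      have hp_eq : p = (s⁻¹ * -(1 - s)) • δ t := by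
        calc p = s⁻¹ • (s • p) := by rw [smul_smul, inv_mul_cancel₀ (ne_of_gt hspos), one_smul]
        _ = (s⁻¹ * -(1 - s)) • δ t := by
              rw [this]; module
      rw [hp_eq]
      exact Wsp.smul_mem _ (hδW t)

  -- local sections indexed by nonzero vectors
  obtain ⟨Vs, rs, hVo, hVmem, hrc, hsec⟩ :
      ∃ (Vs : {x : E // x ≠ 0} → Set E) (rs : {x : E // x ≠ 0} → E → E),
        (∀ i, IsOpen (Vs i)) ∧ (∀ i, A.q i.1 ∈ Vs i) ∧ (∀ i, ContinuousOn (rs i) (Vs i)) ∧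
        (∀ i, ∀ y ∈ Vs i, A.q (rs i y) = y) := by
    choose Vs rs h1 h2 h3 h4 using fun i : {x : E // x ≠ 0} => A.exists_section i.2
    exact ⟨Vs, rs, h1, h2, h3, h4⟩
  set K : Set (ℝ × ℝ) := Icc (0:ℝ) 1 ×ˢ Icc (0:ℝ) 1 with hK
  have hKcpt : IsCompact K := isCompact_Icc.prod isCompact_Icc
  have hcover : K ⊆ ⋃ i, (fun z : ℝ × ℝ => H z.1 z.2) ⁻¹' (Vs i) := by
    rintro ⟨s, t⟩ ⟨hs, ht⟩
    have hne : H s t ≠ 0 := hHne s hs t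
    obtain ⟨x, hx0, hxq⟩ := A.q_surj hrank1 hne
    refine Set.mem_iUnion.mpr ⟨⟨x, hx0⟩, ?_⟩
    show H s t ∈ Vs ⟨x, hx0⟩
    rw [← hxq]
    exact hVmem ⟨x, hx0⟩
  obtain ⟨ε₀, hε₀pos, hLeb⟩ := lebesgue_number_lemma_of_metric hKcpt
    (fun i => (hVo i).preimage hHcont) hcover
  obtain ⟨N, hN⟩ := exists_nat_gt (1 / ε₀)
  have hNpos : 0 < N := by
    by_contra hc
    push_neg at hc
    interval_cases N
    simp at hN
    nlinarith [one_div_pos.mpr hε₀pos]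
  have hNR : (0:ℝ) < (N:ℝ) := by exact_mod_cast hNpos
  have hNd : (1:ℝ) / N < ε₀ := by
    rw [div_lt_iff₀ hNR]
    rw [div_lt_iff₀ hε₀pos] at hN
    nlinarith
  set tj : ℕ → ℝ := fun j => (j:ℝ) / N with htj
  have htj0 : tj 0 = 0 := by simp [htj]
  have htjN : tj N = 1 := by simp only [htj]; exact div_self hNR.ne'
  have htjmono : ∀ j : ℕ, tj j ≤ tj (j+1) := by
    intro j
    show (j:ℝ)/N ≤ ((j+1 : ℕ):ℝ)/N
    push_cast
    gcongr
    linarith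
  have htjmem : ∀ j : ℕ, j ≤ N → tj j ∈ Icc (0:ℝ) 1 := by
    intro j hj
    constructor
    · positivity
    · rw [div_le_one hNR]; exact_mod_cast hj
  have htjdiff : ∀ j : ℕ, tj (j+1) - tj j = 1 / N := by
    intro j
    show ((j+1 : ℕ):ℝ)/N - (j:ℝ)/N = 1/N
    push_cast
    ring
  -- cell certificates
  have hcell : ∀ k j : ℕ, k < N → j < N →
      ∃ i, ∀ s ∈ Icc (tj k) (tj (k+1)), ∀ t ∈ Icc (tj j) (tj (j+1)), H s t ∈ Vs i := by
    intro k j hk hj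
    have hcorner : ((tj k, tj j) : ℝ × ℝ) ∈ K :=
      ⟨htjmem k (le_of_lt hk), htjmem j (le_of_lt hj)⟩
    obtain ⟨i, hi⟩ := hLeb _ hcorner
    refine ⟨i, ?_⟩
    intro s hs t ht
    have : ((s, t) : ℝ × ℝ) ∈ Metric.ball ((tj k, tj j) : ℝ × ℝ) ε₀ := by
      rw [Metric.mem_ball, Prod.dist_eq]
      have h1 : dist s (tj k) < ε₀ := by
        rw [Real.dist_eq, abs_of_nonneg (by linarith [hs.1])]
        have := htjdiff k
        linarith [hs.2]
      have h2 : dist t (tj j) < ε₀ := by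
        rw [Real.dist_eq, abs_of_nonneg (by linarith [ht.1])]
        have := htjdiff j
        linarith [ht.2]
      exact max_lt h1 h2
    exact hi this
  haveI : Nonempty {x : E // x ≠ 0} := ⟨⟨u, hu⟩⟩
  choose! I hI using hcell
  -- continuity in each variable
  have hHc1 : ∀ s : ℝ, Continuous (fun t => H s t) :=
    fun s => hHcont.comp (continuous_const.prodMk continuous_id)
  have hHc2 : ∀ t : ℝ, Continuous (fun s => H s t) :=
    fun t => hHcont.comp (continuous_id.prodMk continuous_const)
  -- squaring kills unit scalars
  have hqe : ∀ ee : ℝ, (ee = 1 ∨ ee = -1) → ∀ z : E, A.q (ee • z) = A.q z := by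
    rintro ee (rfl | rfl) z
    · simp
    · rw [A.q_smul]; norm_num
  have hIccsub : ∀ k : ℕ, k < N → Icc (tj k) (tj (k+1)) ⊆ Icc (0:ℝ) 1 := by
    intro k hk
    exact Icc_subset_Icc (htjmem k (le_of_lt hk)).1 (htjmem (k+1) hk).2
  -- the main induction on columns
  have main : ∀ k : ℕ, k ≤ N → ∃ ℓ : ℕ → ℝ → E,
      (∀ j, j < N → ContinuousOn (ℓ j) (Icc (tj j) (tj (j+1)))) ∧
      (∀ j, j < N → ∀ t ∈ Icc (tj j) (tj (j+1)), A.q (ℓ j t) = H (tj k) t) ∧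
      (∀ j, j + 1 < N → ℓ j (tj (j+1)) = ℓ (j+1) (tj (j+1))) ∧
      ℓ (N-1) 1 = - ℓ 0 0 := by
    intro k hk
    induction k with
    | zero =>
      refine ⟨fun _ => γ, fun j hj => hγcont.continuousOn, ?_, fun j hj => rfl, ?_⟩
      · intro j hj t ht
        show A.q (γ t) = H (tj 0) t
        rw [htj0, hH0]
      · show γ 1 = -γ 0
        rw [hγ1, hγ0]
    | succ k ih =>
      have hkN : k < N := by omega
      obtain ⟨ℓ, hcont, hq, hmatch, hends⟩ := ih (by omega)
      set sk := tj k with hsk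
      set sk1 := tj (k+1) with hsk1
      have hskmem : sk ∈ Icc (tj k) (tj (k+1)) := ⟨le_refl _, htjmono k⟩
      have hsk1mem : sk1 ∈ Icc (tj k) (tj (k+1)) := ⟨htjmono k, le_refl _⟩
      -- cell data for this column
      have hcert : ∀ j, j < N → ∀ s ∈ Icc sk sk1, ∀ t ∈ Icc (tj j) (tj (j+1)),
          H s t ∈ Vs (I k j) := fun j hj => hI k j hkN hj
      have hqR : ∀ j, j < N → ∀ s ∈ Icc sk sk1, ∀ t ∈ Icc (tj j) (tj (j+1)),
          A.q (rs (I k j) (H s t)) = H s t := by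
        intro j hj s hs t ht
        exact hsec _ _ (hcert j hj s hs t ht)
      have hRne : ∀ j, j < N → ∀ s ∈ Icc sk sk1, ∀ t ∈ Icc (tj j) (tj (j+1)),
          rs (I k j) (H s t) ≠ 0 := by
        intro j hj s hs t ht h0
        have h1 := hqR j hj s hs t ht
        rw [h0, A.q_zero] at h1
        exact hHne s (hIccsub k hkN hs) t h1.symm
      -- choose signs
      have hsign : ∀ j, j < N → ∃ ee : ℝ, (ee = 1 ∨ ee = -1) ∧
          ℓ j (tj j) = ee • rs (I k j) (H sk (tj j)) := by
        intro j hj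
        have htjj : tj j ∈ Icc (tj j) (tj (j+1)) := ⟨le_refl _, htjmono j⟩
        have h1 : A.q (ℓ j (tj j)) = H sk (tj j) := hq j hj (tj j) htjj
        have h2 : A.q (rs (I k j) (H sk (tj j))) = H sk (tj j) :=
          hqR j hj sk hskmem (tj j) htjj
        rcases A.two_to_one (h1.trans h2.symm) with h | h
        · exact ⟨1, Or.inl rfl, by rw [one_smul]; exact h⟩
        · exact ⟨-1, Or.inr rfl, by rw [neg_smul, one_smul]; exact h⟩
      choose! ee hee1 hee2 using hsign
      -- continuity of candidate lifts in t at fixed s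
      have hcontc : ∀ j, j < N → ∀ s ∈ Icc sk sk1,
          ContinuousOn (fun t => ee j • rs (I k j) (H s t)) (Icc (tj j) (tj (j+1))) := by
        intro j hj s hs
        refine ContinuousOn.const_smul ?_ (ee j)
        exact (hrc (I k j)).comp (hHc1 s).continuousOn (fun t ht => hcert j hj s hs t ht)
      -- continuity in s at fixed t
      have hconts : ∀ j, j < N → ∀ t ∈ Icc (tj j) (tj (j+1)),
          ContinuousOn (fun s => ee j • rs (I k j) (H s t)) (Icc sk sk1) := by
        intro j hj t ht
        refine ContinuousOn.const_smul ?_ (ee j)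
        exact (hrc (I k j)).comp (hHc2 t).continuousOn (fun s hs => hcert j hj s hs t ht)
      have hqcand : ∀ j, j < N → ∀ s ∈ Icc sk sk1, ∀ t ∈ Icc (tj j) (tj (j+1)),
          A.q (ee j • rs (I k j) (H s t)) = H s t := by
        intro j hj s hs t ht
        rw [hqe (ee j) (hee1 j hj), hqR j hj s hs t ht]
      have hcandne : ∀ j, j < N → ∀ s ∈ Icc sk sk1, ∀ t ∈ Icc (tj j) (tj (j+1)),
          ee j • rs (I k j) (H s t) ≠ 0 := by
        intro j hj s hs t ht h0
        have h1 := hqcand j hj s hs t ht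
        rw [h0, A.q_zero] at h1
        exact hHne s (hIccsub k hkN hs) t h1.symm
      -- C1 : along the old column the candidate agrees with ℓ
      have hC1 : ∀ j, j < N → ∀ t ∈ Icc (tj j) (tj (j+1)),
          ℓ j t = ee j • rs (I k j) (H sk t) := by
        intro j hj
        have hdi := A.dichotomy (isPreconnected_Icc (a := tj j) (b := tj (j+1)))
          (hcont j hj) (hcontc j hj sk hskmem)
          (fun t ht => by rw [hq j hj t ht, hqcand j hj sk hskmem t ht])
          (fun t ht => hcandne j hj sk hskmem t ht)
        have htjj : tj j ∈ Icc (tj j) (tj (j+1)) := ⟨le_refl _, htjmono j⟩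
        rcases hdi with hcase | hcase
        · exact hcase
        · exfalso
          have h1 := hcase (tj j) htjj
          rw [hee2 j hj] at h1
          have h2 : ee j • rs (I k j) (H sk (tj j)) = 0 := by
            have := h1
            have h3 : ee j • rs (I k j) (H sk (tj j)) + ee j • rs (I k j) (H sk (tj j)) = 0 := by
              nth_rewrite 1 [this]
              abel
            have h4 : (2:ℝ) • (ee j • rs (I k j) (H sk (tj j))) = 0 := by
              rw [two_smul]; exact h3
            rcases smul_eq_zero.mp h4 with h5 | h5
            · norm_num at h5
            · exact h5
          exact hcandne j hj sk hskmem (tj j) htjj h2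
      -- the new column lift
      refine ⟨fun j t => ee j • rs (I k j) (H sk1 t), ?_, ?_, ?_, ?_⟩
      · intro j hj
        exact hcontc j hj sk1 hsk1mem
      · intro j hj t ht
        exact hqcand j hj sk1 hsk1mem t ht
      · -- matching between consecutive cells
        intro j hj1
        have hj : j < N := by omega
        have htmem1 : tj (j+1) ∈ Icc (tj j) (tj (j+1)) := ⟨htjmono j, le_refl _⟩
        have htmem2 : tj (j+1) ∈ Icc (tj (j+1)) (tj (j+2)) := ⟨le_refl _, htjmono (j+1)⟩
        have hdi := A.dichotomy (isPreconnected_Icc (a := sk) (b := sk1))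
          (hconts j hj (tj (j+1)) htmem1) (hconts (j+1) hj1 (tj (j+1)) htmem2)
          (fun s hs => by
            rw [hqcand j hj s hs (tj (j+1)) htmem1, hqcand (j+1) hj1 s hs (tj (j+1)) htmem2])
          (fun s hs => hcandne (j+1) hj1 s hs (tj (j+1)) htmem2)
        have heqsk : ee j • rs (I k j) (H sk (tj (j+1)))
            = ee (j+1) • rs (I k (j+1)) (H sk (tj (j+1))) := by
          rw [← hC1 j hj (tj (j+1)) htmem1, ← hC1 (j+1) hj1 (tj (j+1)) htmem2]
          exact hmatch j hj1
        rcases hdi with hcase | hcase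
        · exact hcase sk1 hsk1mem
        · exfalso
          have h1 := hcase sk hskmem
          rw [heqsk] at h1
          have h2 : ee (j+1) • rs (I k (j+1)) (H sk (tj (j+1))) = 0 := by
            have h3 : ee (j+1) • rs (I k (j+1)) (H sk (tj (j+1)))
                + ee (j+1) • rs (I k (j+1)) (H sk (tj (j+1))) = 0 := by
              nth_rewrite 1 [h1]
              abel
            have h4 : (2:ℝ) • (ee (j+1) • rs (I k (j+1)) (H sk (tj (j+1)))) = 0 := by
              rw [two_smul]; exact h3
            rcases smul_eq_zero.mp h4 with h5 | h5
            · norm_num at h5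
            · exact h5
          exact hcandne (j+1) hj1 sk hskmem (tj (j+1)) htmem2 h2
      · -- the antipodal ends condition
        have h0N : 0 < N := hNpos
        have hN1 : N - 1 < N := by omega
        have hzmem : (0:ℝ) ∈ Icc (tj 0) (tj 1) := by
          rw [htj0]
          exact ⟨le_refl _, by rw [← htj0]; exact htjmono 0⟩
        have homem : (1:ℝ) ∈ Icc (tj (N-1)) (tj (N-1+1)) := by
          have : N - 1 + 1 = N := by omega
          rw [this, htjN]
          refine ⟨?_, le_refl _⟩
          rw [← htjN]
          exact (by rw [← this]; exact htjmono (N-1) : tj (N-1) ≤ tj (N-1+1)).trans (by rw [this])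
        have hdi := A.dichotomy (isPreconnected_Icc (a := sk) (b := sk1))
          (hconts 0 h0N 0 hzmem) (hconts (N-1) hN1 1 homem)
          (fun s hs => by
            rw [hqcand 0 h0N s hs 0 hzmem, hqcand (N-1) hN1 s hs 1 homem, hHedge s])
          (fun s hs => hcandne (N-1) hN1 s hs 1 homem)
        have hf0 : ee 0 • rs (I k 0) (H sk 0) = ℓ 0 0 := (hC1 0 h0N 0 hzmem).symm
        have hg0 : ee (N-1) • rs (I k (N-1)) (H sk 1) = ℓ (N-1) 1 :=
          (hC1 (N-1) hN1 1 homem).symm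
        rcases hdi with hcase | hcase
        · exfalso
          have h1 := hcase sk hskmem
          rw [hf0, hg0, hends] at h1
          have h2 : ℓ 0 0 = 0 := by
            have h3 : ℓ 0 0 + ℓ 0 0 = 0 := by nth_rewrite 1 [h1]; abel
            have h4 : (2:ℝ) • ℓ 0 0 = 0 := by rw [two_smul]; exact h3
            rcases smul_eq_zero.mp h4 with h5 | h5
            · norm_num at h5
            · exact h5
          have h6 := hf0
          rw [h2] at h6
          exact hcandne 0 h0N sk hskmem 0 hzmem h6
        · have h1 := hcase sk1 hsk1mem
          show ee (N-1) • rs (I k (N-1)) (H sk1 1) = -(ee 0 • rs (I k 0) (H sk1 0))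
          rw [h1, neg_neg]
  -- final contradiction
  obtain ⟨ℓ, hcont, hq, hmatch, hends⟩ := main N (le_refl N)
  have hqp : ∀ j, j < N → ∀ t ∈ Icc (tj j) (tj (j+1)), A.q (ℓ j t) = p := by
    intro j hj t ht
    rw [hq j hj t ht, htjN, hH1]
  have hlne : ∀ j, j < N → ∀ t ∈ Icc (tj j) (tj (j+1)), ℓ j t ≠ 0 := by
    intro j hj t ht h0
    have := hqp j hj t ht
    rw [h0, A.q_zero] at this
    exact hp0 this.symm
  have hconst : ∀ j, j < N → ℓ j (tj (j+1)) = ℓ j (tj j) := by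
    intro j hj
    have htjj : tj j ∈ Icc (tj j) (tj (j+1)) := ⟨le_refl _, htjmono j⟩
    have htjj1 : tj (j+1) ∈ Icc (tj j) (tj (j+1)) := ⟨htjmono j, le_refl _⟩
    have hdi := A.dichotomy (isPreconnected_Icc (a := tj j) (b := tj (j+1)))
      (hcont j hj) (continuousOn_const (c := ℓ j (tj j)))
      (fun t ht => by rw [hqp j hj t ht, hqp j hj (tj j) htjj])
      (fun t ht => hlne j hj (tj j) htjj)
    rcases hdi with hcase | hcase
    · exact hcase (tj (j+1)) htjj1
    · exfalso
      have h1 := hcase (tj j) htjj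
      have h2 : ℓ j (tj j) = 0 := by
        have h3 : ℓ j (tj j) + ℓ j (tj j) = 0 := by nth_rewrite 1 [h1]; abel
        have h4 : (2:ℝ) • ℓ j (tj j) = 0 := by rw [two_smul]; exact h3
        rcases smul_eq_zero.mp h4 with h5 | h5
        · norm_num at h5
        · exact h5
      exact hlne j hj (tj j) htjj h2
  have hchain : ∀ j, j < N → ℓ j (tj j) = ℓ 0 0 := by
    intro j
    induction j with
    | zero => intro _; rw [htj0]
    | succ j ihj =>
      intro hj1
      have hj : j < N := by omega
      rw [← hmatch j hj1, hconst j hj, ihj hj]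
  have hfin : ℓ (N-1) 1 = ℓ 0 0 := by
    have hN1 : N - 1 < N := by omega
    have h1 : (1:ℝ) = tj (N-1+1) := by
      rw [show N - 1 + 1 = N by omega, htjN]
    rw [h1, hconst (N-1) hN1, hchain (N-1) hN1]
  rw [hends] at hfin
  have h2 : ℓ 0 0 = 0 := by
    have h3 : ℓ 0 0 + ℓ 0 0 = 0 := by nth_rewrite 2 [← hfin]; abel
    have h4 : (2:ℝ) • ℓ 0 0 = 0 := by rw [two_smul]; exact h3
    rcases smul_eq_zero.mp h4 with h5 | h5
    · norm_num at h5
    · exact h5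
  have h6 : (0:ℝ) < 1 ∧ True := ⟨one_pos, trivial⟩
  have h0N : 0 < N := hNpos
  have hzmem : (0:ℝ) ∈ Icc (tj 0) (tj 1) := by
    rw [htj0]
    exact ⟨le_refl _, by rw [← htj0]; exact htjmono 0⟩
  exact hlne 0 h0N 0 hzmem h2


end HopfMul

end NoCommProd

/-- Nonexistence of a product in `ℝⁿ` for `n ≥ 3`: there is no commutative
(not necessarily associative) bilinear product on `ℝⁿ` without zero divisors. -/
theorem no_commutative_product (n : ℕ) (hn : 3 ≤ n) :
    ¬ ∃ m : EuclideanSpace ℝ (Fin n) → EuclideanSpace ℝ (Fin n) → EuclideanSpace ℝ (Fin n),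
      (∀ (a : ℝ) (x y : EuclideanSpace ℝ (Fin n)),
        m x (a • y) = a • m x y ∧ m (a • x) y = a • m x y) ∧
      (∀ x y z : EuclideanSpace ℝ (Fin n), m x (y + z) = m x y + m x z) ∧
      (∀ x y : EuclideanSpace ℝ (Fin n), m x y = 0 → x = 0 ∨ y = 0) ∧
      (∀ x y : EuclideanSpace ℝ (Fin n), m x y = m y x) := by
  rintro ⟨m, h1, h2, h3, h4⟩
  exact HopfMul.false_of_finrank
    { m := m
      smul_right := fun a x y => (h1 a x y).1
      smul_left := fun a x y => (h1 a x y).2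
      add_right := h2
      nzd := h3
      comm := h4 }
    (by rw [finrank_euclideanSpace_fin]; exact hn)
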